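/- Assume the positivity condition θ_k ∈ (0,π) for all 1 ≤ k ≤ N, ∑_{k=1}^N θ_k = 2π, and N ≥ 5. Then D_0 ∩ Δ̄ = ⋃_{I ⊆ {1,…,N}, |I| = N−2} D_0 ∩ F_I. Moreover, for I = {1,…,N}∖{a,b} with 1 ≤ a < b ≤ N, one has D_0 ∩ F_I ≠ {0} if and only if b − a ∉ {1, N−1} (i.e., a and b are not cyclically adjacent) and sin(φ_b − φ_a) = 0. -/

import Mathlib

/-- The cumulative angle `φ_k = ∑_{a=1}^k θ_a`. -/
noncomputable def phiAng (θ : ℕ → ℝ) (k : ℕ) : ℝ := ∑ a ∈ Finset.Icc 1 k, θ a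

/-- The signed-area quadratic form `Q` on `ℝ^{N-2}` (coordinates indexed `1,…,N-2`). -/
noncomputable def Qform (N : ℕ) (θ : ℕ → ℝ) (lam : ℕ → ℝ) : ℝ :=
  -(1/2) * ∑ j ∈ Finset.Icc 1 (N-2),
      Real.sin (phiAng θ N - phiAng θ j) * Real.sin (phiAng θ (N-1) - phiAng θ j)
        / Real.sin (θ N) * (lam j)^2
  - ∑ j ∈ Finset.Icc 1 (N-2), ∑ k ∈ Finset.Icc (j+1) (N-2),
      Real.sin (phiAng θ N - phiAng θ j) * Real.sin (phiAng θ (N-1) - phiAng θ k)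
        / Real.sin (θ N) * (lam j * lam k)

/-- The vector `v`, `v_j = -sin(φ_N - φ_j)/sin(θ_N)`. -/
noncomputable def vvec (N : ℕ) (θ : ℕ → ℝ) (j : ℕ) : ℝ :=
  -(Real.sin (phiAng θ N - phiAng θ j)) / Real.sin (θ N)

/-- The vector `w`, `w_j = sin(φ_{N-1} - φ_j)/sin(θ_N)`. -/
noncomputable def wvec (N : ℕ) (θ : ℕ → ℝ) (j : ℕ) : ℝ :=
  Real.sin (phiAng θ (N-1) - phiAng θ j) / Real.sin (θ N)

/-- The extended side lengths: `λ_k` for `k ≤ N-2`, `λ_{N-1} = vᵀλ`, `λ_N = wᵀλ`. -/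
noncomputable def lamExt (N : ℕ) (θ : ℕ → ℝ) (lam : ℕ → ℝ) (k : ℕ) : ℝ :=
  if k = N - 1 then ∑ j ∈ Finset.Icc 1 (N-2), vvec N θ j * lam j
  else if k = N then ∑ j ∈ Finset.Icc 1 (N-2), wvec N θ j * lam j
  else lam k

/-- Vectors in `ℝ^{N-2}` modelled as functions `ℕ → ℝ` supported on `{1,…,N-2}`. -/
def suppOK (N : ℕ) (lam : ℕ → ℝ) : Prop := ∀ k, k ∉ Finset.Icc 1 (N-2) → lam k = 0

/-- The closed double cone `Δ̄` of vectors with all extended coordinates `≥ 0` or all `≤ 0`. -/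
def DeltaBar (N : ℕ) (θ : ℕ → ℝ) : Set (ℕ → ℝ) :=
  {lam | suppOK N lam ∧
    ((∀ k, 1 ≤ k → k ≤ N → 0 ≤ lamExt N θ lam k) ∨
     (∀ k, 1 ≤ k → k ≤ N → lamExt N θ lam k ≤ 0))}

/-- The isotropic set `D_0 = {λ : Q(λ) = 0}`. -/
def Dzero (N : ℕ) (θ : ℕ → ℝ) : Set (ℕ → ℝ) := {lam | suppOK N lam ∧ Qform N θ lam = 0}

/-- The coordinate subspace `V_I = {λ : λ_j = 0 for j ∈ I}`. -/
def Vface (N : ℕ) (θ : ℕ → ℝ) (I : Finset ℕ) : Set (ℕ → ℝ) :=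
  {lam | suppOK N lam ∧ ∀ j ∈ I, lamExt N θ lam j = 0}

/-- The face `F_I = V_I ∩ Δ̄`. -/
def Fface (N : ℕ) (θ : ℕ → ℝ) (I : Finset ℕ) : Set (ℕ → ℝ) := Vface N θ I ∩ DeltaBar N θ

open Finset Real

lemma pluecker (P Q x y : ℝ) :
    Real.sin (P - y) * Real.sin (Q - x) - Real.sin (P - x) * Real.sin (Q - y)
      = Real.sin (P - Q) * Real.sin (y - x) := by
  simp only [Real.sin_sub, Real.cos_sub]; ring

lemma phiAng_Ioc (θ : ℕ → ℝ) (k : ℕ) : phiAng θ k = ∑ a ∈ Finset.Ioc 0 k, θ a := by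
  rw [phiAng, ← Finset.Icc_add_one_left_eq_Ioc, zero_add]

lemma phi_sub (θ : ℕ → ℝ) {i j : ℕ} (h : i ≤ j) :
    phiAng θ j - phiAng θ i = ∑ t ∈ Finset.Ioc i j, θ t := by
  rw [phiAng_Ioc, phiAng_Ioc, ← Finset.sum_Ioc_consecutive θ (Nat.zero_le i) h]; ring

section Main
variable {N : ℕ} {θ : ℕ → ℝ}

lemma phi_pos (hθ : ∀ k, 1 ≤ k → k ≤ N → θ k ∈ Set.Ioo 0 Real.pi)
    {i j : ℕ} (hij : i < j) (hj : j ≤ N) : 0 < phiAng θ j - phiAng θ i := by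
  rw [phi_sub θ hij.le]
  apply Finset.sum_pos
  · intro t ht
    simp only [Finset.mem_Ioc] at ht
    exact (hθ t (by omega) (by omega)).1
  · exact ⟨j, by simp [Finset.mem_Ioc, hij]⟩

lemma phi_lt (hθ : ∀ k, 1 ≤ k → k ≤ N → θ k ∈ Set.Ioo 0 Real.pi)
    (hsum : ∑ k ∈ Finset.Icc 1 N, θ k = 2 * Real.pi)
    {i j : ℕ} (hi : 1 ≤ i) (hij : i < j) (hj : j ≤ N) :
    phiAng θ j - phiAng θ i < 2 * Real.pi := by
  have h2 : phiAng θ N = 2 * Real.pi := by rw [phiAng]; exact hsum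
  have e1 : phiAng θ N - phiAng θ j = ∑ t ∈ Finset.Ioc j N, θ t := phi_sub θ hj
  have e2 : phiAng θ i - phiAng θ 0 = ∑ t ∈ Finset.Ioc 0 i, θ t := phi_sub θ (Nat.zero_le i)
  have h0 : phiAng θ 0 = 0 := by simp [phiAng]
  have hA : 0 ≤ ∑ t ∈ Finset.Ioc j N, θ t := by
    apply Finset.sum_nonneg
    intro t ht; simp only [Finset.mem_Ioc] at ht
    exact (hθ t (by omega) (by omega)).1.le
  have hB : 0 < ∑ t ∈ Finset.Ioc 0 i, θ t := by
    apply Finset.sum_pos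
    · intro t ht; simp only [Finset.mem_Ioc] at ht
      exact (hθ t (by omega) (by omega)).1
    · exact ⟨i, by simp only [Finset.mem_Ioc]; omega⟩
  linarith

lemma angle_pi (hθ : ∀ k, 1 ≤ k → k ≤ N → θ k ∈ Set.Ioo 0 Real.pi)
    (hsum : ∑ k ∈ Finset.Icc 1 N, θ k = 2 * Real.pi)
    {a b : ℕ} (ha : 1 ≤ a) (hab : a < b) (hb : b ≤ N)
    (h0 : Real.sin (phiAng θ b - phiAng θ a) = 0) :
    phiAng θ b - phiAng θ a = Real.pi := by
  obtain ⟨n, hn⟩ := Real.sin_eq_zero_iff.mp h0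
  have h1 := phi_pos hθ hab hb
  have h2 := phi_lt hθ hsum ha hab hb
  have hπ := Real.pi_pos
  have hn1 : n = 1 := by
    by_contra hne
    rcases lt_or_gt_of_ne hne with h | h
    · have : n ≤ 0 := by omega
      have : (n:ℝ) * π ≤ 0 := mul_nonpos_of_nonpos_of_nonneg (by exact_mod_cast this) hπ.le
      linarith
    · have : 2 ≤ n := by omega
      have : (2:ℝ) * π ≤ (n:ℝ) * π := by
        apply mul_le_mul_of_nonneg_right _ hπ.le; exact_mod_cast this
      linarith
  rw [hn1] at hn; push_cast at hn; linarith

lemma theta_last (hN : 1 ≤ N) : phiAng θ N - phiAng θ (N-1) = θ N := by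
  rw [phi_sub θ (by omega : N - 1 ≤ N)]
  have : Finset.Ioc (N-1) N = {N} := by
    ext t; simp only [Finset.mem_Ioc, Finset.mem_singleton]; omega
  rw [this, Finset.sum_singleton]

end Main

section Closure
variable {N : ℕ} {θ : ℕ → ℝ}

lemma lamExt_low (hN : 3 ≤ N) (lam : ℕ → ℝ) {k : ℕ} (hk : k ≤ N-2) :
    lamExt N θ lam k = lam k := by
  rw [lamExt, if_neg (by omega), if_neg (by omega)]

lemma lamExt_v (hN : 3 ≤ N) (lam : ℕ → ℝ) :
    lamExt N θ lam (N-1) = ∑ j ∈ Finset.Icc 1 (N-2), vvec N θ j * lam j := by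
  rw [lamExt, if_pos rfl]

lemma lamExt_w (hN : 3 ≤ N) (lam : ℕ → ℝ) :
    lamExt N θ lam N = ∑ j ∈ Finset.Icc 1 (N-2), wvec N θ j * lam j := by
  rw [lamExt, if_neg (by omega), if_pos rfl]

lemma sum_split (hN : 3 ≤ N) (f : ℕ → ℝ) :
    ∑ k ∈ Finset.Icc 1 N, f k
      = (∑ k ∈ Finset.Icc 1 (N-2), f k) + f (N-1) + f N := by
  obtain ⟨n, rfl⟩ : ∃ n, N = n + 2 := ⟨N - 2, by omega⟩
  have h1 : n + 2 - 2 = n := by omega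
  have h2 : n + 2 - 1 = n + 1 := by omega
  have e1 : Finset.Icc 1 (n+2) = Finset.Ioc 0 (n+2) := Finset.Icc_add_one_left_eq_Ioc 0 (n+2)
  have e2 : Finset.Icc 1 n = Finset.Ioc 0 n := Finset.Icc_add_one_left_eq_Ioc 0 n
  rw [h1, h2, e1, e2]
  rw [← Finset.sum_Ioc_consecutive f (Nat.zero_le n) (by omega : n ≤ n + 2)]
  have : ∑ k ∈ Finset.Ioc n (n+2), f k = f (n+1) + f (n+2) := by
    rw [Finset.sum_Ioc_succ_top (by omega : n ≤ n + 1),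
        Finset.sum_Ioc_succ_top (by omega : n ≤ n),
        Finset.Ioc_self, Finset.sum_empty, zero_add]
  rw [this]; ring

lemma closureLam (hN : 3 ≤ N) (hs : Real.sin (θ N) ≠ 0) (lam : ℕ → ℝ) (x : ℝ) :
    ∑ k ∈ Finset.Icc 1 N, lamExt N θ lam k * Real.sin (phiAng θ k - x) = 0 := by
  have hsθ : Real.sin (θ N) = Real.sin (phiAng θ N - phiAng θ (N-1)) := by
    rw [theta_last (by omega)]
  rw [sum_split hN, lamExt_v hN, lamExt_w hN, Finset.sum_mul, Finset.sum_mul]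
  rw [← Finset.sum_add_distrib, ← Finset.sum_add_distrib]
  apply Finset.sum_eq_zero
  intro j hj
  simp only [Finset.mem_Icc] at hj
  rw [lamExt_low hN lam hj.2, vvec, wvec]
  have hP := pluecker (phiAng θ N) (phiAng θ (N-1)) x (phiAng θ j)
  rw [hsθ] at hs ⊢
  field_simp
  linear_combination (-(lam j)) * hP

lemma closureLam' (hN : 3 ≤ N) (hs : Real.sin (θ N) ≠ 0) (lam : ℕ → ℝ) (x : ℝ) :
    ∑ k ∈ Finset.Icc 1 N, lamExt N θ lam k * Real.sin (x - phiAng θ k) = 0 := by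
  have := closureLam hN hs lam x
  rw [← neg_eq_zero, ← Finset.sum_neg_distrib] at this
  rw [← this]
  apply Finset.sum_congr rfl
  intro k _
  rw [show x - phiAng θ k = -(phiAng θ k - x) by ring, Real.sin_neg]; ring

end Closure

lemma tri_swap (n : ℕ) (F : ℕ → ℕ → ℝ) :
    ∑ j ∈ Finset.Ioc 0 n, ∑ k ∈ Finset.Ioc 0 j, F j k
      = ∑ k ∈ Finset.Ioc 0 n, ∑ j ∈ Finset.Icc k n, F j k := by
  have L : ∑ j ∈ Finset.Ioc 0 n, ∑ k ∈ Finset.Ioc 0 j, F j k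
      = ∑ j ∈ Finset.Ioc 0 n, ∑ k ∈ Finset.Ioc 0 n, if k ≤ j then F j k else 0 := by
    apply Finset.sum_congr rfl
    intro j hj
    simp only [Finset.mem_Ioc] at hj
    rw [← Finset.sum_filter]
    congr 1
    ext k
    simp only [Finset.mem_filter, Finset.mem_Ioc]
    omega
  rw [L, Finset.sum_comm]
  apply Finset.sum_congr rfl
  intro k hk
  simp only [Finset.mem_Ioc] at hk
  rw [← Finset.sum_filter]
  congr 1
  ext j
  simp only [Finset.mem_filter, Finset.mem_Ioc, Finset.mem_Icc]
  omega

section Identity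
variable {N : ℕ} {θ : ℕ → ℝ}

set_option maxHeartbeats 1000000 in
lemma identityII (hN : 5 ≤ N) (hs : Real.sin (θ N) ≠ 0) (lam : ℕ → ℝ) :
    2 * Qform N θ lam
      = ∑ k ∈ Finset.Icc 1 N, lamExt N θ lam k *
          ∑ j ∈ Finset.Ioc k N, lamExt N θ lam j * Real.sin (phiAng θ j - phiAng θ k) := by
  obtain ⟨n, rfl⟩ : ∃ n, N = n + 2 := ⟨N - 2, by omega⟩
  have h1 : n + 2 - 2 = n := by omega
  have h2 : n + 2 - 1 = n + 1 := by omega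
  have hlast : phiAng θ (n+2) - phiAng θ (n+1) = θ (n+2) := by
    have := theta_last (θ := θ) (N := n+2) (by omega)
    rwa [h2] at this
  set s0 := Real.sin (θ (n+2)) with hs0
  set A : ℕ → ℝ := fun j => Real.sin (phiAng θ (n+2) - phiAng θ j) with hA
  set B : ℕ → ℝ := fun j => Real.sin (phiAng θ (n+1) - phiAng θ j) with hB
  set SA := ∑ j ∈ Finset.Icc 1 n, A j * lam j with hSA
  set SB := ∑ j ∈ Finset.Icc 1 n, B j * lam j with hSB
  set Dg := ∑ j ∈ Finset.Icc 1 n, A j * B j * (lam j * lam j) with hDg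
  set U := ∑ j ∈ Finset.Icc 1 n, ∑ k ∈ Finset.Ioc j n, A j * B k * (lam j * lam k) with hU
  set M := ∑ j ∈ Finset.Icc 1 n, ∑ k ∈ Finset.Ioc j n, A k * B j * (lam j * lam k) with hM
  set T0 := ∑ j ∈ Finset.Icc 1 n, lam j *
      ∑ k ∈ Finset.Ioc j n, lam k * Real.sin (phiAng θ k - phiAng θ j) with hT0
  -- the extended coordinates
  have hLv' : lamExt (n+2) θ lam (n+1) = -SA / s0 := by
    have e0 : n + 1 = (n+2) - 1 := by omega
    rw [e0, lamExt_v (by omega), h1]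
    rw [show (∑ j ∈ Finset.Icc 1 n, vvec (n+2) θ j * lam j)
        = ∑ j ∈ Finset.Icc 1 n, -(A j * lam j) / s0 from
      Finset.sum_congr rfl (fun j _ => by rw [vvec]; simp only [hA, hs0]; ring)]
    rw [← Finset.sum_div, ← Finset.sum_neg_distrib]
  have hLw : lamExt (n+2) θ lam (n+2) = SB / s0 := by
    rw [lamExt_w (by omega), h1]
    rw [show (∑ j ∈ Finset.Icc 1 n, wvec (n+2) θ j * lam j)
        = ∑ j ∈ Finset.Icc 1 n, (B j * lam j) / s0 from
      Finset.sum_congr rfl (fun j _ => by rw [wvec, h2]; simp only [hB, hs0]; ring)]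
    rw [← Finset.sum_div, ← hSB]
  -- RHS computation
  have hRHS : (∑ k ∈ Finset.Icc 1 (n+2), lamExt (n+2) θ lam k *
          ∑ j ∈ Finset.Ioc k (n+2), lamExt (n+2) θ lam j * Real.sin (phiAng θ j - phiAng θ k))
      = T0 - SA * SB / s0 := by
    rw [sum_split (by omega), h1, h2]
    have hmain : ∀ k ∈ Finset.Icc 1 n,
        lamExt (n+2) θ lam k * ∑ j ∈ Finset.Ioc k (n+2), lamExt (n+2) θ lam j *
            Real.sin (phiAng θ j - phiAng θ k)
        = lam k * (∑ j ∈ Finset.Ioc k n, lam j * Real.sin (phiAng θ j - phiAng θ k))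
          + (-SA/s0) * (B k * lam k) + (SB/s0) * (A k * lam k) := by
      intro k hk
      simp only [Finset.mem_Icc] at hk
      rw [Finset.sum_Ioc_succ_top (by omega : k ≤ n + 1),
          Finset.sum_Ioc_succ_top (by omega : k ≤ n)]
      rw [lamExt_low (by omega) lam (by omega : k ≤ n + 2 - 2), hLv', hLw]
      rw [Finset.sum_congr rfl (fun j hj => by
        rw [lamExt_low (by omega) lam
          (by simp only [Finset.mem_Ioc] at hj; omega : j ≤ n + 2 - 2)] :
        ∀ j ∈ Finset.Ioc k n, lamExt (n+2) θ lam j * Real.sin (phiAng θ j - phiAng θ k)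
          = lam j * Real.sin (phiAng θ j - phiAng θ k))]
      simp only [hA, hB]
      ring
    rw [Finset.sum_congr rfl hmain]
    rw [Finset.sum_add_distrib, Finset.sum_add_distrib]
    rw [← Finset.mul_sum, ← Finset.mul_sum]
    have t2 : lamExt (n+2) θ lam (n+2) *
        (∑ j ∈ Finset.Ioc (n+2) (n+2), lamExt (n+2) θ lam j *
          Real.sin (phiAng θ j - phiAng θ (n+2))) = 0 := by
      rw [Finset.Ioc_self, Finset.sum_empty, mul_zero]
    have t1 : lamExt (n+2) θ lam (n+1) *
        (∑ j ∈ Finset.Ioc (n+1) (n+2), lamExt (n+2) θ lam j *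
          Real.sin (phiAng θ j - phiAng θ (n+1)))
        = (-SA/s0) * (SB/s0 * s0) := by
      rw [show Finset.Ioc (n+1) (n+2) = {n+2} by
          ext t; simp only [Finset.mem_Ioc, Finset.mem_singleton]; omega,
        Finset.sum_singleton, hLv', hLw, hlast, ← hs0]
    rw [t1, t2]
    have e1 : ∑ k ∈ Finset.Icc 1 n, B k * lam k = SB := rfl
    have e2 : ∑ k ∈ Finset.Icc 1 n, A k * lam k = SA := rfl
    rw [e1, e2, ← hT0]
    field_simp
    ring
  rw [hRHS]
  -- LHS computation
  have hQ : 2 * Qform (n+2) θ lam = -Dg/s0 - 2 * (U/s0) := by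
    rw [Qform, h1, h2]
    have d1 : ∑ j ∈ Finset.Icc 1 n,
        Real.sin (phiAng θ (n+2) - phiAng θ j) * Real.sin (phiAng θ (n+1) - phiAng θ j)
          / Real.sin (θ (n+2)) * lam j ^ 2 = Dg / s0 := by
      rw [hDg, Finset.sum_div]
      apply Finset.sum_congr rfl
      intro j _
      simp only [hA, hB, hs0]
      ring
    have d2 : ∑ j ∈ Finset.Icc 1 n, ∑ k ∈ Finset.Icc (j+1) n,
        Real.sin (phiAng θ (n+2) - phiAng θ j) * Real.sin (phiAng θ (n+1) - phiAng θ k)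
          / Real.sin (θ (n+2)) * (lam j * lam k) = U / s0 := by
      rw [hU, Finset.sum_div]
      apply Finset.sum_congr rfl
      intro j _
      rw [Finset.Icc_add_one_left_eq_Ioc, Finset.sum_div]
      apply Finset.sum_congr rfl
      intro k _
      simp only [hA, hB, hs0]
      ring
    rw [d1, d2]
    ring
  rw [hQ]
  -- key sum identities
  have hSAB : SA * SB = Dg + M + U := by
    rw [hSA, hSB, Finset.sum_mul_sum]
    have sp : ∀ j ∈ Finset.Icc 1 n, ∑ k ∈ Finset.Icc 1 n, (A j * lam j) * (B k * lam k)
        = (∑ k ∈ Finset.Ioc 0 j, (A j * lam j) * (B k * lam k))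
          + ∑ k ∈ Finset.Ioc j n, (A j * lam j) * (B k * lam k) := by
      intro j hj
      simp only [Finset.mem_Icc] at hj
      rw [show Finset.Icc 1 n = Finset.Ioc 0 n from Finset.Icc_add_one_left_eq_Ioc 0 n]
      rw [Finset.sum_Ioc_consecutive _ (Nat.zero_le j) hj.2]
    rw [Finset.sum_congr rfl sp, Finset.sum_add_distrib]
    have swap1 : ∑ j ∈ Finset.Icc 1 n, ∑ k ∈ Finset.Ioc 0 j, (A j * lam j) * (B k * lam k)
        = Dg + M := by
      rw [show Finset.Icc 1 n = Finset.Ioc 0 n from Finset.Icc_add_one_left_eq_Ioc 0 n]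
      rw [tri_swap n (fun j k => (A j * lam j) * (B k * lam k))]
      have step : ∀ k ∈ Finset.Ioc 0 n, ∑ j ∈ Finset.Icc k n, (A j * lam j) * (B k * lam k)
          = (A k * B k * (lam k * lam k))
            + ∑ j ∈ Finset.Ioc k n, (A j * lam j) * (B k * lam k) := by
        intro k hk
        simp only [Finset.mem_Ioc] at hk
        rw [Finset.Icc_eq_cons_Ioc hk.2, Finset.sum_cons]
        congr 1
        ring
      rw [Finset.sum_congr rfl step, Finset.sum_add_distrib]
      rw [hDg, hM]
      rw [show Finset.Icc 1 n = Finset.Ioc 0 n from Finset.Icc_add_one_left_eq_Ioc 0 n]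
      congr 1
      apply Finset.sum_congr rfl
      intro k _
      apply Finset.sum_congr rfl
      intro j _
      ring
    rw [swap1, hU]
    rw [Finset.sum_congr rfl (fun j _ => Finset.sum_congr rfl (fun k _ => by ring) :
      ∀ j ∈ Finset.Icc 1 n, ∑ k ∈ Finset.Ioc j n, (A j * lam j) * (B k * lam k)
        = ∑ k ∈ Finset.Ioc j n, A j * B k * (lam j * lam k))]
  have hST : s0 * T0 = M - U := by
    rw [hT0, Finset.mul_sum]
    rw [hM, hU, ← Finset.sum_sub_distrib]
    apply Finset.sum_congr rfl
    intro j hj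
    rw [Finset.mul_sum, Finset.mul_sum, ← Finset.sum_sub_distrib]
    apply Finset.sum_congr rfl
    intro k hk
    have hP := pluecker (phiAng θ (n+2)) (phiAng θ (n+1)) (phiAng θ j) (phiAng θ k)
    rw [hlast, ← hs0] at hP
    simp only [hA, hB]
    linear_combination (-(lam j * lam k)) * hP
  have hT0v : T0 = (M - U)/s0 := by
    rw [eq_div_iff hs]
    linear_combination hST
  rw [hT0v, hSAB]
  field_simp
  ring
end Identity

lemma unimodal (a b : ℕ) (c : ℕ → ℝ)
    (pat : ∀ s t, a < s → s ≤ t → t ≤ b → c s < 0 → c t ≤ 0)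
    (tot : ∑ t ∈ Finset.Ioc a b, c t = 0) :
    ∀ m, m ≤ b → 0 ≤ ∑ t ∈ Finset.Ioc a m, c t := by
  intro m hm
  by_cases ham : m ≤ a
  · rw [Finset.Ioc_eq_empty (by omega), Finset.sum_empty]
  · push_neg at ham
    by_contra hneg
    push_neg at hneg
    have hsplit : ∑ t ∈ Finset.Ioc a m, c t + ∑ t ∈ Finset.Ioc m b, c t = 0 := by
      rw [Finset.sum_Ioc_consecutive c ham.le hm]; exact tot
    have h2 : (0:ℝ) < ∑ t ∈ Finset.Ioc m b, c t := by linarith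
    obtain ⟨t', ht', hct'⟩ := Finset.exists_lt_of_sum_lt
      (show ∑ t ∈ Finset.Ioc m b, (0:ℝ) < ∑ t ∈ Finset.Ioc m b, c t by simpa using h2)
    obtain ⟨s', hs', hcs'⟩ := Finset.exists_lt_of_sum_lt
      (show ∑ t ∈ Finset.Ioc a m, c t < ∑ t ∈ Finset.Ioc a m, (0:ℝ) by simpa using hneg)
    simp only [Finset.mem_Ioc] at ht' hs'
    exact absurd (pat s' t' hs'.1 (by omega) ht'.2 hcs') (not_le.mpr hct')

lemma shift_sum (N r : ℕ) (f : ℕ → ℝ) :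
    ∑ t ∈ Finset.Ioc N (r + N), f t = ∑ j ∈ Finset.Ioc 0 r, f (j + N) := by
  have : Finset.Ioc N (r + N) = (Finset.Ioc 0 r).map (addRightEmbedding N) := by
    rw [Finset.map_add_right_Ioc, zero_add]
  rw [this, Finset.sum_map]
  rfl

section Core
variable {N : ℕ} {θ : ℕ → ℝ}

lemma core_sin_zero (hN : 5 ≤ N)
    (hθ : ∀ k, 1 ≤ k → k ≤ N → θ k ∈ Set.Ioo 0 Real.pi)
    (hsum : ∑ k ∈ Finset.Icc 1 N, θ k = 2 * Real.pi)
    (lam : ℕ → ℝ)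
    (hnn : ∀ k, 1 ≤ k → k ≤ N → 0 ≤ lamExt N θ lam k)
    (hQ : Qform N θ lam = 0) :
    ∀ j k, 1 ≤ j → j ≤ N → 1 ≤ k → k ≤ N →
      lamExt N θ lam j ≠ 0 → lamExt N θ lam k ≠ 0 →
      Real.sin (phiAng θ j - phiAng θ k) = 0 := by
  have hsN : (0:ℝ) < Real.sin (θ N) :=
    Real.sin_pos_of_pos_of_lt_pi (hθ N (by omega) le_rfl).1 (hθ N (by omega) le_rfl).2
  have hs : Real.sin (θ N) ≠ 0 := ne_of_gt hsN
  have hIoc : Finset.Icc 1 N = Finset.Ioc 0 N := Finset.Icc_add_one_left_eq_Ioc 0 N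
  set lx : ℕ → ℝ := lamExt N θ lam with hlx
  -- extended data
  set Le : ℕ → ℝ := fun m => if m ≤ N then lx m else lx (m - N) with hLe
  set Ph : ℕ → ℝ := fun m => if m ≤ N then phiAng θ m else phiAng θ (m - N) + 2*Real.pi
    with hPh
  -- closure in the (φ_j - φ_k) orientation
  have CL : ∀ k, ∑ j ∈ Finset.Ioc 0 N, lx j * Real.sin (phiAng θ j - phiAng θ k) = 0 := by
    intro k
    have := closureLam (θ := θ) (by omega : 3 ≤ N) hs lam (phiAng θ k)
    rw [hIoc] at this
    exact this
  -- basic split of the closure sum at an index k ∈ [1,N]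
  have SPLIT : ∀ k, 1 ≤ k → k ≤ N → ∀ τ, k ≤ τ → τ ≤ N →
      (∑ j ∈ Finset.Ioc 0 (k-1), lx j * Real.sin (phiAng θ j - phiAng θ k))
      + (∑ j ∈ Finset.Ioc k τ, lx j * Real.sin (phiAng θ j - phiAng θ k))
      + (∑ j ∈ Finset.Ioc τ N, lx j * Real.sin (phiAng θ j - phiAng θ k)) = 0 := by
    intro k hk1 hkN τ hkτ hτN
    have e1 := Finset.sum_Ioc_consecutive
      (fun j => lx j * Real.sin (phiAng θ j - phiAng θ k)) (Nat.zero_le (k-1))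
      (by omega : k - 1 ≤ N)
    have e2 := Finset.sum_Ioc_consecutive
      (fun j => lx j * Real.sin (phiAng θ j - phiAng θ k)) (by omega : k ≤ τ) hτN
    have e3 : ∑ j ∈ Finset.Ioc (k-1) N, lx j * Real.sin (phiAng θ j - phiAng θ k)
        = lx k * Real.sin (phiAng θ k - phiAng θ k)
          + ∑ j ∈ Finset.Ioc k N, lx j * Real.sin (phiAng θ j - phiAng θ k) := by
      rw [show Finset.Ioc (k-1) N = Finset.Icc k N by
            rw [← Finset.Icc_add_one_left_eq_Ioc]; congr 1; omega,
          Finset.Icc_eq_cons_Ioc hkN, Finset.sum_cons]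
    rw [sub_self, Real.sin_zero, mul_zero, zero_add] at e3
    have := CL k
    linarith [this, e1, e2, e3]
  -- the angle increments are within (0, 2π) and monotone
  have PhBound : ∀ k, 1 ≤ k → k ≤ N → ∀ t, k < t → t ≤ k + N - 1 →
      0 < Ph t - phiAng θ k ∧ Ph t - phiAng θ k < 2*Real.pi := by
    intro k hk1 hkN t hkt htb
    by_cases htN : t ≤ N
    · rw [hPh]
      simp only [if_pos htN]
      exact ⟨phi_pos hθ hkt htN, phi_lt hθ hsum hk1 hkt htN⟩
    · push_neg at htN
      rw [hPh]
      simp only [if_neg (by omega : ¬ t ≤ N)]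
      have h1 : 0 < phiAng θ k - phiAng θ (t - N) := phi_pos hθ (by omega) hkN
      have h2 : phiAng θ k - phiAng θ (t - N) < 2*Real.pi :=
        phi_lt hθ hsum (by omega) (by omega) hkN
      constructor <;> linarith
  have PhMono : ∀ k, 1 ≤ k → k ≤ N → ∀ t t', k < t → t ≤ t' → t' ≤ k + N - 1 →
      Ph t ≤ Ph t' := by
    intro k hk1 hkN t t' hkt htt' ht'b
    by_cases htN : t ≤ N
    · by_cases ht'N : t' ≤ N
      · rw [hPh]; simp only [if_pos htN, if_pos ht'N]
        have : phiAng θ t' - phiAng θ t = ∑ u ∈ Finset.Ioc t t', θ u := phi_sub θ htt'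
        have hnn2 : 0 ≤ ∑ u ∈ Finset.Ioc t t', θ u := by
          apply Finset.sum_nonneg
          intro u hu; simp only [Finset.mem_Ioc] at hu
          exact (hθ u (by omega) (by omega)).1.le
        linarith
      · push_neg at ht'N
        rw [hPh]; simp only [if_pos htN, if_neg (by omega : ¬ t' ≤ N)]
        have : phiAng θ t - phiAng θ (t' - N) < 2*Real.pi :=
          phi_lt hθ hsum (by omega) (by omega) htN
        linarith
    · push_neg at htN
      have ht'N : ¬ t' ≤ N := by omega
      rw [hPh]; simp only [if_neg (by omega : ¬ t ≤ N), if_neg ht'N]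
      have : phiAng θ (t'-N) - phiAng θ (t-N) = ∑ u ∈ Finset.Ioc (t-N) (t'-N), θ u :=
        phi_sub θ (by omega)
      have hnn2 : 0 ≤ ∑ u ∈ Finset.Ioc (t-N) (t'-N), θ u := by
        apply Finset.sum_nonneg
        intro u hu; simp only [Finset.mem_Ioc] at hu
        exact (hθ u (by omega) (by omega)).1.le
      linarith
  -- Le is nonnegative on the relevant range
  have LeNN : ∀ k, 1 ≤ k → k ≤ N → ∀ t, k < t → t ≤ k + N - 1 → 0 ≤ Le t := by
    intro k hk1 hkN t hkt htb
    rw [hLe]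
    by_cases htN : t ≤ N
    · simp only [if_pos htN]; exact hnn t (by omega) htN
    · simp only [if_neg htN]; exact hnn (t - N) (by omega) (by omega)
  -- total of the cyclic increments is zero
  have TOT : ∀ k, 1 ≤ k → k ≤ N →
      ∑ t ∈ Finset.Ioc k (k + N - 1), Le t * Real.sin (Ph t - phiAng θ k) = 0 := by
    intro k hk1 hkN
    rw [← Finset.sum_Ioc_consecutive _ hkN (by omega : N ≤ k + N - 1)]
    have p1 : ∑ t ∈ Finset.Ioc k N, Le t * Real.sin (Ph t - phiAng θ k)
        = ∑ t ∈ Finset.Ioc k N, lx t * Real.sin (phiAng θ t - phiAng θ k) := by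
      apply Finset.sum_congr rfl
      intro t ht; simp only [Finset.mem_Ioc] at ht
      rw [hLe, hPh]; simp only [if_pos ht.2]
    have p2 : ∑ t ∈ Finset.Ioc N (k + N - 1), Le t * Real.sin (Ph t - phiAng θ k)
        = ∑ j ∈ Finset.Ioc 0 (k-1), lx j * Real.sin (phiAng θ j - phiAng θ k) := by
      rw [show k + N - 1 = (k-1) + N by omega, shift_sum]
      apply Finset.sum_congr rfl
      intro j hj; simp only [Finset.mem_Ioc] at hj
      rw [hLe, hPh]
      simp only [if_neg (by omega : ¬ j + N ≤ N)]
      rw [show j + N - N = j by omega]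
      rw [show phiAng θ j + 2*Real.pi - phiAng θ k
            = phiAng θ j - phiAng θ k + 2*Real.pi by ring, Real.sin_add_two_pi]
    rw [p1, p2]
    have := SPLIT k hk1 hkN N hkN le_rfl
    rw [Finset.Ioc_self, Finset.sum_empty] at this
    linarith
  -- partial sums are nonnegative
  have PS : ∀ k, 1 ≤ k → k ≤ N → ∀ m, m ≤ k + N - 1 →
      0 ≤ ∑ t ∈ Finset.Ioc k m, Le t * Real.sin (Ph t - phiAng θ k) := by
    intro k hk1 hkN
    apply unimodal k (k + N - 1) _ _ (TOT k hk1 hkN)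
    intro s t hks hst htb hcs
    have hLs := LeNN k hk1 hkN s hks (by omega)
    have hLt := LeNN k hk1 hkN t (by omega) htb
    have hsin_s : Real.sin (Ph s - phiAng θ k) < 0 := by
      rcases lt_or_ge (Real.sin (Ph s - phiAng θ k)) 0 with h | h
      · exact h
      · nlinarith
    have hBs := PhBound k hk1 hkN s hks (by omega)
    have hBt := PhBound k hk1 hkN t (by omega) htb
    have hMst := PhMono k hk1 hkN s t hks hst htb
    have hπs : Real.pi < Ph s - phiAng θ k := by
      by_contra hc
      push_neg at hc
      exact absurd (Real.sin_nonneg_of_nonneg_of_le_pi hBs.1.le hc) (not_le.mpr hsin_s)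
    have hsin_t : Real.sin (Ph t - phiAng θ k) ≤ 0 := by
      have h1 : 0 < Ph t - phiAng θ k - Real.pi := by linarith
      have h2 : Ph t - phiAng θ k - Real.pi < Real.pi := by
        have := hBt.2; have := Real.pi_pos; linarith [Real.two_pi_pos]
      have := Real.sin_pos_of_pos_of_lt_pi h1 h2
      rw [Real.sin_sub_pi] at this
      linarith
    exact mul_nonpos_of_nonneg_of_nonpos hLt hsin_t
  -- the area identity specialised at Q = 0
  have claim3 : ∑ k ∈ Finset.Icc 1 N, lx k *
      (∑ j ∈ Finset.Ioc k N, lx j * Real.sin (phiAng θ j - phiAng θ k)) = 0 := by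
    have II := identityII hN hs lam
    rw [hQ, mul_zero] at II
    exact II.symm
  have claim4 : ∀ τ, τ ≤ N → ∑ k ∈ Finset.Icc 1 N, lx k *
      ((∑ j ∈ Finset.Ioc k N, lx j * Real.sin (phiAng θ j - phiAng θ k))
        + ∑ j ∈ Finset.Ioc 0 τ, lx j * Real.sin (phiAng θ j - phiAng θ k)) = 0 := by
    intro τ hτ
    have hDz : ∑ k ∈ Finset.Icc 1 N, lx k *
        (∑ j ∈ Finset.Ioc 0 τ, lx j * Real.sin (phiAng θ j - phiAng θ k)) = 0 := by
      have e : ∀ k ∈ Finset.Icc 1 N, lx k *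
          (∑ j ∈ Finset.Ioc 0 τ, lx j * Real.sin (phiAng θ j - phiAng θ k))
          = ∑ j ∈ Finset.Ioc 0 τ, lx k * (lx j * Real.sin (phiAng θ j - phiAng θ k)) :=
        fun k _ => Finset.mul_sum _ _ _
      rw [Finset.sum_congr rfl e, Finset.sum_comm]
      apply Finset.sum_eq_zero
      intro j _
      have inner : ∑ k ∈ Finset.Icc 1 N, lx k * (lx j * Real.sin (phiAng θ j - phiAng θ k))
          = lx j * ∑ k ∈ Finset.Icc 1 N, lx k * Real.sin (phiAng θ j - phiAng θ k) := by
        rw [Finset.mul_sum]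
        exact Finset.sum_congr rfl (fun k _ => by ring)
      rw [inner, closureLam' (by omega : 3 ≤ N) hs lam (phiAng θ j), mul_zero]
    have e2 : ∀ k ∈ Finset.Icc 1 N, lx k *
        ((∑ j ∈ Finset.Ioc k N, lx j * Real.sin (phiAng θ j - phiAng θ k))
          + ∑ j ∈ Finset.Ioc 0 τ, lx j * Real.sin (phiAng θ j - phiAng θ k))
        = lx k * (∑ j ∈ Finset.Ioc k N, lx j * Real.sin (phiAng θ j - phiAng θ k))
          + lx k * (∑ j ∈ Finset.Ioc 0 τ, lx j * Real.sin (phiAng θ j - phiAng θ k)) :=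
      fun k _ => by ring
    rw [Finset.sum_congr rfl e2, Finset.sum_add_distrib, claim3, hDz, add_zero]
  have claim5 : ∀ k, 1 ≤ k → k ≤ N → ∀ τ, τ ≤ N →
      0 ≤ (∑ j ∈ Finset.Ioc k N, lx j * Real.sin (phiAng θ j - phiAng θ k))
        + ∑ j ∈ Finset.Ioc 0 τ, lx j * Real.sin (phiAng θ j - phiAng θ k) := by
    intro k hk1 hkN τ hτ
    have congrLe : ∀ a b : ℕ, b ≤ N → ∀ j ∈ Finset.Ioc a b,
        Le j * Real.sin (Ph j - phiAng θ k) = lx j * Real.sin (phiAng θ j - phiAng θ k) := by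
      intro a b hb j hj
      simp only [Finset.mem_Ioc] at hj
      rw [hLe, hPh]
      simp only [if_pos (by omega : j ≤ N)]
    by_cases hkτ : k ≤ τ
    · have h0 := SPLIT k hk1 hkN τ hkτ hτ
      have d1 := Finset.sum_Ioc_consecutive
        (fun j => lx j * Real.sin (phiAng θ j - phiAng θ k)) (Nat.zero_le (k-1))
        (by omega : k - 1 ≤ τ)
      have d2 : ∑ j ∈ Finset.Ioc (k-1) τ, lx j * Real.sin (phiAng θ j - phiAng θ k)
          = lx k * Real.sin (phiAng θ k - phiAng θ k)
            + ∑ j ∈ Finset.Ioc k τ, lx j * Real.sin (phiAng θ j - phiAng θ k) := by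
        rw [show Finset.Ioc (k-1) τ = Finset.Icc k τ by
              rw [← Finset.Icc_add_one_left_eq_Ioc]; congr 1; omega,
            Finset.Icc_eq_cons_Ioc hkτ, Finset.sum_cons]
      rw [sub_self, Real.sin_zero, mul_zero, zero_add] at d2
      have g1 := Finset.sum_Ioc_consecutive
        (fun j => lx j * Real.sin (phiAng θ j - phiAng θ k)) hkτ hτ
      have pos : 0 ≤ ∑ j ∈ Finset.Ioc k τ, lx j * Real.sin (phiAng θ j - phiAng θ k) := by
        have hps := PS k hk1 hkN τ (by omega)
        rwa [Finset.sum_congr rfl (congrLe k τ hτ)] at hps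
      linarith
    · push_neg at hkτ
      have e := Finset.sum_Ioc_consecutive
        (fun t => Le t * Real.sin (Ph t - phiAng θ k)) hkN (by omega : N ≤ τ + N)
      have p1 : ∑ t ∈ Finset.Ioc k N, Le t * Real.sin (Ph t - phiAng θ k)
          = ∑ t ∈ Finset.Ioc k N, lx t * Real.sin (phiAng θ t - phiAng θ k) :=
        Finset.sum_congr rfl (congrLe k N le_rfl)
      have p2 : ∑ t ∈ Finset.Ioc N (τ + N), Le t * Real.sin (Ph t - phiAng θ k)
          = ∑ j ∈ Finset.Ioc 0 τ, lx j * Real.sin (phiAng θ j - phiAng θ k) := by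
        rw [shift_sum]
        apply Finset.sum_congr rfl
        intro j hj; simp only [Finset.mem_Ioc] at hj
        rw [hLe, hPh]
        simp only [if_neg (by omega : ¬ j + N ≤ N)]
        rw [show j + N - N = j by omega]
        rw [show phiAng θ j + 2*Real.pi - phiAng θ k
              = phiAng θ j - phiAng θ k + 2*Real.pi by ring, Real.sin_add_two_pi]
      have hps := PS k hk1 hkN (τ + N) (by omega)
      rw [← e, p1, p2] at hps
      exact hps
  have claim6 : ∀ τ, τ ≤ N → ∀ k, 1 ≤ k → k ≤ N →
      lx k * ((∑ j ∈ Finset.Ioc k N, lx j * Real.sin (phiAng θ j - phiAng θ k))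
        + ∑ j ∈ Finset.Ioc 0 τ, lx j * Real.sin (phiAng θ j - phiAng θ k)) = 0 := by
    intro τ hτ k hk1 hkN
    have := (Finset.sum_eq_zero_iff_of_nonneg (by
      intro i hi
      simp only [Finset.mem_Icc] at hi
      exact mul_nonneg (hnn i hi.1 hi.2) (claim5 i hi.1 hi.2 τ hτ))).mp (claim4 τ hτ)
    exact this k (by simp only [Finset.mem_Icc]; omega)
  -- conclusion
  intro j k hj1 hjN hk1 hkN hlj hlk
  by_cases hjk : j = k
  · subst hjk; simp
  · have z1 := claim6 j hjN k hk1 hkN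
    have z2 := claim6 (j-1) (by omega) k hk1 hkN
    have zero1 : (∑ i ∈ Finset.Ioc k N, lx i * Real.sin (phiAng θ i - phiAng θ k))
        + ∑ i ∈ Finset.Ioc 0 j, lx i * Real.sin (phiAng θ i - phiAng θ k) = 0 :=
      (mul_eq_zero.mp z1).resolve_left hlk
    have zero2 : (∑ i ∈ Finset.Ioc k N, lx i * Real.sin (phiAng θ i - phiAng θ k))
        + ∑ i ∈ Finset.Ioc 0 (j-1), lx i * Real.sin (phiAng θ i - phiAng θ k) = 0 :=
      (mul_eq_zero.mp z2).resolve_left hlk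
    have dstep := Finset.sum_Ioc_succ_top (Nat.zero_le (j-1))
      (fun i => lx i * Real.sin (phiAng θ i - phiAng θ k))
    rw [show j - 1 + 1 = j by omega] at dstep
    have hfin : lx j * Real.sin (phiAng θ j - phiAng θ k) = 0 := by linarith
    exact (mul_eq_zero.mp hfin).resolve_left hlj

end Core

section Helpers
variable {N : ℕ} {θ : ℕ → ℝ}

lemma lamExt_neg (lam : ℕ → ℝ) (k : ℕ) :
    lamExt N θ (fun j => -lam j) k = -(lamExt N θ lam k) := by
  unfold lamExt
  split_ifs with h1 h2
  · rw [← Finset.sum_neg_distrib]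
    exact Finset.sum_congr rfl (fun j _ => by ring)
  · rw [← Finset.sum_neg_distrib]
    exact Finset.sum_congr rfl (fun j _ => by ring)
  · rfl

lemma Qform_neg (lam : ℕ → ℝ) : Qform N θ (fun j => -lam j) = Qform N θ lam := by
  unfold Qform
  congr 1
  · congr 1
    exact Finset.sum_congr rfl (fun j _ => by ring)
  · apply Finset.sum_congr rfl
    intro j _
    exact Finset.sum_congr rfl (fun k _ => by ring)

lemma lamExt_zero (k : ℕ) : lamExt N θ (0 : ℕ → ℝ) k = 0 := by
  unfold lamExt
  split_ifs <;> simp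

lemma Qform_zero : Qform N θ (0 : ℕ → ℝ) = 0 := by
  unfold Qform
  simp

lemma sum_ind (s : Finset ℕ) (f : ℕ → ℝ) (a : ℕ) (ha : a ∈ s) :
    ∑ j ∈ s, f j * (if j = a then (1:ℝ) else 0) = f a := by
  rw [show (∑ j ∈ s, f j * (if j = a then (1:ℝ) else 0))
      = ∑ j ∈ s, (if j = a then f j else 0) from
    Finset.sum_congr rfl (fun j _ => by split_ifs <;> simp)]
  rw [Finset.sum_ite_eq' s a f, if_pos ha]

lemma sum_ind2 (s : Finset ℕ) (f : ℕ → ℝ) (a b : ℕ) (ha : a ∈ s) (hb : b ∈ s) :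
    ∑ j ∈ s, f j * ((if j = a then (1:ℝ) else 0) + (if j = b then (1:ℝ) else 0))
      = f a + f b := by
  rw [show (∑ j ∈ s, f j * ((if j = a then (1:ℝ) else 0) + (if j = b then (1:ℝ) else 0)))
      = ∑ j ∈ s, (f j * (if j = a then (1:ℝ) else 0) + f j * (if j = b then (1:ℝ) else 0))
      from Finset.sum_congr rfl (fun j _ => by ring)]
  rw [Finset.sum_add_distrib, sum_ind s f a ha, sum_ind s f b hb]

lemma witness_ne (hN : 5 ≤ N) (hs : Real.sin (θ N) ≠ 0)
    {a b : ℕ} (ha : 1 ≤ a) (hab : a < b) (hbN : b ≤ N)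
    (lam : ℕ → ℝ)
    (hsupp : suppOK N lam)
    (hab_only : ∀ k, 1 ≤ k → k ≤ N → k ≠ a → k ≠ b → lamExt N θ lam k = 0)
    (hnonneg : ∀ k, 1 ≤ k → k ≤ N → 0 ≤ lamExt N θ lam k)
    (hsin : Real.sin (phiAng θ b - phiAng θ a) = 0)
    (hlam_ne : lam ≠ 0) :
    Dzero N θ ∩ Fface N θ (Finset.Icc 1 N \ {a, b}) ≠ {0} := by
  have hQ : Qform N θ lam = 0 := by
    have II := identityII hN hs lam
    have hz : ∑ k ∈ Finset.Icc 1 N, lamExt N θ lam k *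
        ∑ j ∈ Finset.Ioc k N, lamExt N θ lam j * Real.sin (phiAng θ j - phiAng θ k)
        = 0 := by
      apply Finset.sum_eq_zero
      intro k hk
      simp only [Finset.mem_Icc] at hk
      by_cases hka : k = a
      · subst hka
        rw [Finset.mul_sum]
        apply Finset.sum_eq_zero
        intro j hj
        simp only [Finset.mem_Ioc] at hj
        by_cases hjb : j = b
        · subst hjb
          rw [hsin, mul_zero, mul_zero]
        · rw [hab_only j (by omega) hj.2 (by omega) hjb, zero_mul, mul_zero]
      · by_cases hkb : k = b
        · subst hkb
          rw [Finset.mul_sum]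
          apply Finset.sum_eq_zero
          intro j hj
          simp only [Finset.mem_Ioc] at hj
          rw [hab_only j (by omega) hj.2 (by omega) (by omega), zero_mul, mul_zero]
        · rw [hab_only k hk.1 hk.2 hka hkb, zero_mul]
    rw [hz] at II
    linarith
  have hVI : ∀ j ∈ Finset.Icc 1 N \ ({a, b} : Finset ℕ), lamExt N θ lam j = 0 := by
    intro j hj
    rw [Finset.mem_sdiff, Finset.mem_Icc] at hj
    have hj2 := hj.2
    simp only [Finset.mem_insert, Finset.mem_singleton] at hj2
    push_neg at hj2
    exact hab_only j hj.1.1 hj.1.2 hj2.1 hj2.2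
  have hmem : lam ∈ Dzero N θ ∩ Fface N θ (Finset.Icc 1 N \ {a, b}) :=
    ⟨⟨hsupp, hQ⟩, ⟨hsupp, hVI⟩, hsupp, Or.inl hnonneg⟩
  intro hcon
  rw [hcon] at hmem
  exact hlam_ne hmem

end Helpers

/-- Structure of isotropic vectors in `Δ̄`: `D_0 ∩ Δ̄` is covered by the faces `F_I` with
`|I| = N-2`, and such a face meets `D_0` nontrivially exactly when the two omitted indices
are not cyclically adjacent and `sin(φ_b - φ_a) = 0`. -/
theorem stmt6 (N : ℕ) (hN : 5 ≤ N) (θ : ℕ → ℝ)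
    (hθ : ∀ k, 1 ≤ k → k ≤ N → θ k ∈ Set.Ioo 0 Real.pi)
    (hsum : ∑ k ∈ Finset.Icc 1 N, θ k = 2 * Real.pi) :
    (Dzero N θ ∩ DeltaBar N θ
        = ⋃ (I : Finset ℕ) (_ : I ⊆ Finset.Icc 1 N ∧ I.card = N - 2),
            Dzero N θ ∩ Fface N θ I) ∧
    ∀ a b : ℕ, 1 ≤ a → a < b → b ≤ N →
      (Dzero N θ ∩ Fface N θ (Finset.Icc 1 N \ {a, b}) ≠ {0} ↔
        (b - a ≠ 1 ∧ b - a ≠ N - 1) ∧ Real.sin (phiAng θ b - phiAng θ a) = 0) := by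
  have hsN : (0:ℝ) < Real.sin (θ N) :=
    Real.sin_pos_of_pos_of_lt_pi (hθ N (by omega) le_rfl).1 (hθ N (by omega) le_rfl).2
  have hs : Real.sin (θ N) ≠ 0 := ne_of_gt hsN
  constructor
  · apply Set.Subset.antisymm
    · rintro lam ⟨⟨hsupp, hQ⟩, hDB⟩
      have hcone := hDB.2
      have key : ∀ j k, 1 ≤ j → j ≤ N → 1 ≤ k → k ≤ N →
          lamExt N θ lam j ≠ 0 → lamExt N θ lam k ≠ 0 →
          Real.sin (phiAng θ j - phiAng θ k) = 0 := by
        rcases hcone with hpos | hneg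
        · exact core_sin_zero hN hθ hsum lam hpos hQ
        · intro j k hj1 hj2 hk1 hk2 hnj hnk
          have hpos' : ∀ k', 1 ≤ k' → k' ≤ N → 0 ≤ lamExt N θ (fun i => -lam i) k' := by
            intro k' h1 h2
            rw [lamExt_neg]
            simpa using (hneg k' h1 h2)
          exact core_sin_zero hN hθ hsum _ hpos' (by rw [Qform_neg]; exact hQ) j k hj1 hj2
            hk1 hk2 (by rw [lamExt_neg]; simpa using hnj) (by rw [lamExt_neg]; simpa using hnk)
      set S := Finset.filter (fun k => lamExt N θ lam k ≠ 0) (Finset.Icc 1 N) with hSdef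
      have hScard : S.card ≤ 2 := by
        by_contra hc
        push_neg at hc
        have H3 : ∀ p q r : ℕ, p ∈ S → q ∈ S → r ∈ S → p < q → q < r → False := by
          intro p q r hp hq hr hpq hqr
          rw [hSdef, Finset.mem_filter, Finset.mem_Icc] at hp hq hr
          have e1 := angle_pi hθ hsum (by omega : 1 ≤ p) hpq (by omega : q ≤ N)
            (key q p (by omega) (by omega) (by omega) (by omega) hq.2 hp.2)
          have e2 := angle_pi hθ hsum (by omega : 1 ≤ q) hqr (by omega : r ≤ N)
            (key r q (by omega) (by omega) (by omega) (by omega) hr.2 hq.2)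
          have e3 := phi_lt hθ hsum (by omega : 1 ≤ p) (by omega : p < r) (by omega : r ≤ N)
          linarith
        obtain ⟨x, y, z, hx, hy, hz, hxy, hxz, hyz⟩ := Finset.two_lt_card_iff.mp hc
        rcases Nat.lt_trichotomy x y with h1 | h1 | h1
        · rcases Nat.lt_trichotomy y z with h2 | h2 | h2
          · exact H3 x y z hx hy hz h1 h2
          · exact hyz h2
          · rcases Nat.lt_trichotomy x z with h3 | h3 | h3
            · exact H3 x z y hx hz hy h3 h2
            · exact hxz h3
            · exact H3 z x y hz hx hy h3 h1
        · exact hxy h1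
        · rcases Nat.lt_trichotomy x z with h2 | h2 | h2
          · exact H3 y x z hy hx hz h1 h2
          · exact hxz h2
          · rcases Nat.lt_trichotomy y z with h3 | h3 | h3
            · exact H3 y z x hy hz hx h3 h2
            · exact hyz h3
            · exact H3 z y x hz hy hx h3 h1
      have hsub : S ⊆ Finset.Icc 1 N := Finset.filter_subset _ _
      have hcard2 : N - 2 ≤ (Finset.Icc 1 N \ S).card := by
        rw [Finset.card_sdiff_of_subset hsub, Nat.card_Icc]
        omega
      obtain ⟨I, hIsub, hIcard⟩ := Finset.exists_subset_card_eq hcard2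
      simp only [Set.mem_iUnion]
      have hVI : ∀ j ∈ I, lamExt N θ lam j = 0 := by
        intro j hj
        have hmem := hIsub hj
        rw [Finset.mem_sdiff, hSdef, Finset.mem_filter] at hmem
        by_contra hne
        exact hmem.2 ⟨hmem.1, hne⟩
      exact ⟨I, ⟨hIsub.trans Finset.sdiff_subset, hIcard⟩,
        ⟨hsupp, hQ⟩, ⟨hsupp, hVI⟩, hDB⟩
    · intro lam h
      simp only [Set.mem_iUnion] at h
      obtain ⟨I, ⟨hIsub, hIcard⟩, hmem⟩ := h
      exact ⟨hmem.1, hmem.2.2⟩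
  · intro a b ha hab hbN
    constructor
    · -- forward direction
      intro hne
      have h0mem : (0 : ℕ → ℝ) ∈ Dzero N θ ∩ Fface N θ (Finset.Icc 1 N \ {a, b}) := by
        refine ⟨⟨fun k _ => rfl, Qform_zero⟩, ⟨fun k _ => rfl, fun j _ => lamExt_zero j⟩,
          fun k _ => rfl, Or.inl (fun k _ _ => le_of_eq (lamExt_zero k).symm)⟩
      obtain ⟨lam, hlam, hlam0⟩ :
          ∃ lam ∈ Dzero N θ ∩ Fface N θ (Finset.Icc 1 N \ {a, b}), lam ≠ 0 := by
        by_contra hcon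
        push_neg at hcon
        apply hne
        apply Set.eq_singleton_iff_unique_mem.mpr
        exact ⟨h0mem, fun x hx => hcon x hx⟩
      obtain ⟨⟨hsupp, hQ⟩, ⟨-, hVI⟩, hDB⟩ := hlam
      obtain ⟨i, hi⟩ : ∃ i, lam i ≠ 0 := by
        by_contra h; push_neg at h; exact hlam0 (funext h)
      have hiI : i ∈ Finset.Icc 1 (N-2) := by
        by_contra h; exact hi (hsupp i h)
      rw [Finset.mem_Icc] at hiI
      have hlx_i : lamExt N θ lam i ≠ 0 := by
        rw [lamExt_low (by omega) lam hiI.2]; exact hi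
      have hoff : ∀ k, 1 ≤ k → k ≤ N → k ≠ a → k ≠ b → lamExt N θ lam k = 0 := by
        intro k h1 h2 h3 h4
        apply hVI
        rw [Finset.mem_sdiff, Finset.mem_Icc]
        refine ⟨⟨h1, h2⟩, ?_⟩
        simp only [Finset.mem_insert, Finset.mem_singleton]
        push_neg
        exact ⟨h3, h4⟩
      have hiab : i = a ∨ i = b := by
        by_contra h
        push_neg at h
        exact hlx_i (hoff i (by omega) (by omega) h.1 h.2)
      have hsubab : ({a, b} : Finset ℕ) ⊆ Finset.Icc 1 N := by
        intro x hx
        simp only [Finset.mem_insert, Finset.mem_singleton] at hx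
        rw [Finset.mem_Icc]
        rcases hx with rfl | rfl <;> omega
      have redA : ∀ x : ℝ, ∑ k ∈ Finset.Icc 1 N, lamExt N θ lam k * Real.sin (phiAng θ k - x)
          = lamExt N θ lam a * Real.sin (phiAng θ a - x)
            + lamExt N θ lam b * Real.sin (phiAng θ b - x) := by
        intro x
        rw [← Finset.sum_subset hsubab (fun k hk hk2 => by
          rw [Finset.mem_Icc] at hk
          simp only [Finset.mem_insert, Finset.mem_singleton] at hk2
          push_neg at hk2
          rw [hoff k hk.1 hk.2 hk2.1 hk2.2, zero_mul])]
        rw [Finset.sum_pair (show a ≠ b by omega)]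
      have CLa := closureLam (by omega : 3 ≤ N) hs lam (phiAng θ a)
      have CLb := closureLam (by omega : 3 ≤ N) hs lam (phiAng θ b)
      rw [redA] at CLa CLb
      rw [sub_self, Real.sin_zero, mul_zero, zero_add] at CLa
      rw [sub_self, Real.sin_zero, mul_zero, add_zero] at CLb
      have hsin : Real.sin (phiAng θ b - phiAng θ a) = 0 := by
        rcases hiab with h | h
        · subst h
          have h2 : Real.sin (phiAng θ i - phiAng θ b) = 0 :=
            (mul_eq_zero.mp CLb).resolve_left hlx_i
          rw [show phiAng θ b - phiAng θ i = -(phiAng θ i - phiAng θ b) by ring,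
            Real.sin_neg, h2, neg_zero]
        · subst h
          exact (mul_eq_zero.mp CLa).resolve_left hlx_i
      refine ⟨⟨?_, ?_⟩, hsin⟩
      · intro h1
        have hIb : Finset.Ioc a b = {b} := by
          ext t; simp only [Finset.mem_Ioc, Finset.mem_singleton]; omega
        have e : phiAng θ b - phiAng θ a = θ b := by
          rw [phi_sub θ hab.le, hIb, Finset.sum_singleton]
        have hpos := Real.sin_pos_of_pos_of_lt_pi (hθ b (by omega) hbN).1
          (hθ b (by omega) hbN).2
        rw [e] at hsin
        linarith
      · intro h1
        have ha1 : a = 1 := by omega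
        have hbN' : b = N := by omega
        have hval := angle_pi hθ hsum ha hab hbN hsin
        have h2 : phiAng θ N = 2*Real.pi := by rw [phiAng]; exact hsum
        have h3 : phiAng θ 1 = θ 1 := by
          rw [phiAng, Finset.Icc_self, Finset.sum_singleton]
        have hθ1 := hθ 1 le_rfl (by omega)
        rw [ha1, hbN', h2, h3] at hval
        have := hθ1.2
        have hπ := Real.pi_pos
        linarith
    · -- backward direction
      rintro ⟨⟨hadj1, hadjN⟩, hsin⟩
      have hπval : phiAng θ b - phiAng θ a = Real.pi := angle_pi hθ hsum ha hab hbN hsin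
      rcases show b ≤ N - 2 ∨ b = N - 1 ∨ b = N by omega with hb | hb | hb
      · -- case b ≤ N - 2
        set lam : ℕ → ℝ := fun j => (if j = a then (1:ℝ) else 0) + (if j = b then (1:ℝ) else 0)
          with hlamdef
        have haI : a ∈ Finset.Icc 1 (N-2) := by rw [Finset.mem_Icc]; omega
        have hbI : b ∈ Finset.Icc 1 (N-2) := by rw [Finset.mem_Icc]; omega
        have hb' : phiAng θ b = phiAng θ a + Real.pi := by linarith
        have hv : lamExt N θ lam (N-1) = 0 := by
          rw [lamExt_v (by omega), sum_ind2 _ _ a b haI hbI]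
          rw [vvec, vvec, hb', show phiAng θ N - (phiAng θ a + Real.pi)
              = (phiAng θ N - phiAng θ a) - Real.pi by ring, Real.sin_sub_pi]
          ring
        have hw : lamExt N θ lam N = 0 := by
          rw [lamExt_w (by omega), sum_ind2 _ _ a b haI hbI]
          rw [wvec, wvec, hb', show phiAng θ (N-1) - (phiAng θ a + Real.pi)
              = (phiAng θ (N-1) - phiAng θ a) - Real.pi by ring, Real.sin_sub_pi]
          ring
        have hlow : ∀ k, k ≤ N - 2 → lamExt N θ lam k = lam k :=
          fun k hk => lamExt_low (by omega) lam hk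
        apply witness_ne hN hs ha hab hbN lam
        · intro k hk
          have hka : k ≠ a := fun h => hk (h ▸ haI)
          have hkb : k ≠ b := fun h => hk (h ▸ hbI)
          simp [hlamdef, hka, hkb]
        · intro k h1 h2 h3 h4
          rcases show k ≤ N-2 ∨ k = N-1 ∨ k = N by omega with h | h | h
          · rw [hlow k h]; simp [hlamdef, h3, h4]
          · rw [h]; exact hv
          · rw [h]; exact hw
        · intro k h1 h2
          rcases show k ≤ N-2 ∨ k = N-1 ∨ k = N by omega with h | h | h
          · rw [hlow k h]
            simp only [hlamdef]
            split_ifs <;> norm_num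
          · rw [h, hv]
          · rw [h, hw]
        · exact hsin
        · intro hcon
          have h1 : lam a = 1 := by simp [hlamdef, show a ≠ b by omega]
          rw [hcon] at h1
          simpa using h1
      · -- case b = N - 1
        subst hb
        set lam : ℕ → ℝ := fun j => if j = a then (1:ℝ) else 0 with hlamdef
        have haI : a ∈ Finset.Icc 1 (N-2) := by rw [Finset.mem_Icc]; omega
        have hθlast : phiAng θ N - phiAng θ (N-1) = θ N := theta_last (by omega)
        have hv : lamExt N θ lam (N-1) = 1 := by
          rw [lamExt_v (by omega), sum_ind _ _ a haI, vvec]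
          rw [show phiAng θ N - phiAng θ a = θ N + Real.pi by linarith, Real.sin_add_pi]
          field_simp
        have hw : lamExt N θ lam N = 0 := by
          rw [lamExt_w (by omega), sum_ind _ _ a haI, wvec, hπval, Real.sin_pi]
          simp
        have hlow : ∀ k, k ≤ N - 2 → lamExt N θ lam k = lam k :=
          fun k hk => lamExt_low (by omega) lam hk
        apply witness_ne hN hs ha hab hbN lam
        · intro k hk
          have hka : k ≠ a := fun h => hk (h ▸ haI)
          simp [hlamdef, hka]
        · intro k h1 h2 h3 h4
          rcases show k ≤ N-2 ∨ k = N-1 ∨ k = N by omega with h | h | h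
          · rw [hlow k h]; simp [hlamdef, h3]
          · exact absurd h h4
          · rw [h]; exact hw
        · intro k h1 h2
          rcases show k ≤ N-2 ∨ k = N-1 ∨ k = N by omega with h | h | h
          · rw [hlow k h]
            simp only [hlamdef]
            split_ifs <;> norm_num
          · rw [h, hv]; norm_num
          · rw [h, hw]
        · exact hsin
        · intro hcon
          have h1 : lam a = 1 := by simp [hlamdef]
          rw [hcon] at h1
          simpa using h1
      · -- case b = N
        set lam : ℕ → ℝ := fun j => if j = a then (1:ℝ) else 0 with hlamdef
        have haI : a ∈ Finset.Icc 1 (N-2) := by rw [Finset.mem_Icc]; omega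
        have hθlast : phiAng θ N - phiAng θ (N-1) = θ N := theta_last (by omega)
        have hπN : phiAng θ N - phiAng θ a = Real.pi := by
          rw [← hb]; exact hπval
        have hv : lamExt N θ lam (N-1) = 0 := by
          rw [lamExt_v (by omega), sum_ind _ _ a haI, vvec, hπN, Real.sin_pi]
          simp
        have hw : lamExt N θ lam N = 1 := by
          rw [lamExt_w (by omega), sum_ind _ _ a haI, wvec]
          rw [show phiAng θ (N-1) - phiAng θ a = Real.pi - θ N by linarith, Real.sin_pi_sub]
          field_simp
        have hlow : ∀ k, k ≤ N - 2 → lamExt N θ lam k = lam k :=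
          fun k hk => lamExt_low (by omega) lam hk
        apply witness_ne hN hs ha hab hbN lam
        · intro k hk
          have hka : k ≠ a := fun h => hk (h ▸ haI)
          simp [hlamdef, hka]
        · intro k h1 h2 h3 h4
          rcases show k ≤ N-2 ∨ k = N-1 ∨ k = N by omega with h | h | h
          · rw [hlow k h]; simp [hlamdef, h3]
          · rw [h]; exact hv
          · exact absurd (h.trans hb.symm) h4
        · intro k h1 h2
          rcases show k ≤ N-2 ∨ k = N-1 ∨ k = N by omega with h | h | h
          · rw [hlow k h]
            simp only [hlamdef]
            split_ifs <;> norm_num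
          · rw [h, hv]
          · rw [h, hw]; norm_num
        · exact hsin
        · intro hcon
          have h1 : lam a = 1 := by simp [hlamdef]
          rw [hcon] at h1
          simpa using h1
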